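/- Assume P ≥ 1 and assume there exists at least one y ∈ {0,1}^n with Σ_{i=1}^n w_i y_i = W. Then f has a unique maximizer over {0,1}^n if and only if there is exactly one x ∈ {0,1}^n with Σ_{i=1}^n w_i x_i = W attaining max{ Σ_{i=1}^n p_i y_i : y ∈ {0,1}^n, Σ_{i=1}^n w_i y_i = W }. -/

import Mathlib

/-- The hyperbolic objective
`f(x) = (2 + Σ p_i x_i) / (1 + 2P·(W − Σ w_i x_i))` with `P = Σ p_i`,
regarded as a rational number, on 0-1 vectors `x ∈ {0,1}^n`. -/
def hypObj (n : ℕ) (w p : Fin n → ℕ) (W : ℕ) (x : Fin n → ℤ) : ℚ :=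
  ((2 + ∑ i : Fin n, (p i : ℤ) * x i : ℤ) : ℚ) /
    ((1 + 2 * (∑ i : Fin n, (p i : ℤ)) *
        ((W : ℤ) - ∑ i : Fin n, (w i : ℤ) * x i) : ℤ) : ℚ)

private lemma hyp_q_nonneg {n : ℕ} (p : Fin n → ℕ) {x : Fin n → ℤ}
    (hx : ∀ i, x i = 0 ∨ x i = 1) : (0:ℤ) ≤ ∑ i : Fin n, (p i : ℤ) * x i :=
  Finset.sum_nonneg fun i _ => by rcases hx i with h | h <;> simp [h]

private lemma hyp_q_le {n : ℕ} (p : Fin n → ℕ) {x : Fin n → ℤ}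
    (hx : ∀ i, x i = 0 ∨ x i = 1) :
    ∑ i : Fin n, (p i : ℤ) * x i ≤ ∑ i : Fin n, (p i : ℤ) :=
  Finset.sum_le_sum fun i _ => by
    rcases hx i with h | h <;> simp [h]

private lemma hyp_eq {n : ℕ} (w p : Fin n → ℕ) (W : ℕ) {x : Fin n → ℤ}
    (hs : (∑ i : Fin n, (w i : ℤ) * x i) = (W : ℤ)) :
    hypObj n w p W x = ((2 + ∑ i : Fin n, (p i : ℤ) * x i : ℤ) : ℚ) := by
  unfold hypObj
  rw [hs]
  simp

private lemma hyp_lt {n : ℕ} (w p : Fin n → ℕ) (W : ℕ)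
    (hP : 1 ≤ ∑ i : Fin n, (p i : ℤ)) {x : Fin n → ℤ}
    (hx : ∀ i, x i = 0 ∨ x i = 1)
    (hs : (∑ i : Fin n, (w i : ℤ) * x i) ≠ (W : ℤ)) :
    hypObj n w p W x < 2 := by
  set P : ℤ := ∑ i : Fin n, (p i : ℤ) with hPdef
  set s : ℤ := ∑ i : Fin n, (w i : ℤ) * x i with hsdef
  set q : ℤ := ∑ i : Fin n, (p i : ℤ) * x i with hqdef
  have hq0 : (0:ℤ) ≤ q := hyp_q_nonneg p hx
  have hqP : q ≤ P := hyp_q_le p hx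
  have hnum : (0:ℚ) < ((2 + q : ℤ) : ℚ) := by
    have : (0:ℤ) < 2 + q := by linarith
    exact_mod_cast this
  rcases lt_or_gt_of_ne hs with hlt | hgt
  · -- s < W : denominator ≥ 1 + 2P > 0
    have hW : (1:ℤ) ≤ (W : ℤ) - s := by linarith
    have hden : (0:ℤ) < 1 + 2 * P * ((W:ℤ) - s) := by nlinarith
    have hdenQ : (0:ℚ) < ((1 + 2 * P * ((W:ℤ) - s) : ℤ) : ℚ) := by exact_mod_cast hden
    rw [hypObj, ← hsdef, ← hqdef, ← hPdef, div_lt_iff₀ hdenQ]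
    have : (2 + q : ℤ) < 2 * (1 + 2 * P * ((W:ℤ) - s)) := by nlinarith
    calc ((2 + q : ℤ) : ℚ) < ((2 * (1 + 2 * P * ((W:ℤ) - s)) : ℤ) : ℚ) := by
          exact_mod_cast this
      _ = 2 * ((1 + 2 * P * ((W:ℤ) - s) : ℤ) : ℚ) := by push_cast; ring
  · -- s > W : denominator negative, value negative
    have hW : (W : ℤ) - s ≤ -1 := by linarith
    have hden : 1 + 2 * P * ((W:ℤ) - s) < 0 := by nlinarith
    have hdenQ : ((1 + 2 * P * ((W:ℤ) - s) : ℤ) : ℚ) < 0 := by exact_mod_cast hden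
    rw [hypObj, ← hsdef, ← hqdef, ← hPdef]
    have := div_neg_of_pos_of_neg hnum hdenQ
    linarith

theorem hypObj_unique_maximizer_iff (n : ℕ) (w p : Fin n → ℕ) (W : ℕ)
    (hP : 1 ≤ ∑ i : Fin n, (p i : ℤ))
    (hfeas : ∃ y : Fin n → ℤ, (∀ i, y i = 0 ∨ y i = 1) ∧
      (∑ i : Fin n, (w i : ℤ) * y i) = (W : ℤ)) :
    (∃! x : Fin n → ℤ, (∀ i, x i = 0 ∨ x i = 1) ∧
        ∀ y : Fin n → ℤ, (∀ i, y i = 0 ∨ y i = 1) →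
          hypObj n w p W y ≤ hypObj n w p W x) ↔
      (∃! x : Fin n → ℤ, (∀ i, x i = 0 ∨ x i = 1) ∧
        (∑ i : Fin n, (w i : ℤ) * x i) = (W : ℤ) ∧
        ∀ y : Fin n → ℤ, (∀ i, y i = 0 ∨ y i = 1) →
          (∑ i : Fin n, (w i : ℤ) * y i) = (W : ℤ) →
            (∑ i : Fin n, (p i : ℤ) * y i) ≤ ∑ i : Fin n, (p i : ℤ) * x i) := by
  obtain ⟨y₀, hy₀01, hy₀s⟩ := hfeas
  apply existsUnique_congr
  intro x
  constructor
  · rintro ⟨hx01, hmax⟩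
    refine ⟨hx01, ?_⟩
    have h2 : (2:ℚ) ≤ hypObj n w p W x := by
      have := hmax y₀ hy₀01
      rw [hyp_eq w p W hy₀s] at this
      have hq0 : (0:ℤ) ≤ ∑ i : Fin n, (p i : ℤ) * y₀ i := hyp_q_nonneg p hy₀01
      have : (2:ℚ) ≤ ((2 + ∑ i : Fin n, (p i : ℤ) * y₀ i : ℤ) : ℚ) := by
        have h' : (0:ℚ) ≤ ((∑ i : Fin n, (p i : ℤ) * y₀ i : ℤ) : ℚ) := by exact_mod_cast hq0
        push_cast; exact_mod_cast by linarith
      linarith [hmax y₀ hy₀01, hyp_eq w p W hy₀s ▸ this]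
    have hsx : (∑ i : Fin n, (w i : ℤ) * x i) = (W : ℤ) := by
      by_contra h
      exact absurd h2 (not_le.mpr (hyp_lt w p W hP hx01 h))
    refine ⟨hsx, fun z hz01 hzs => ?_⟩
    have := hmax z hz01
    rw [hyp_eq w p W hzs, hyp_eq w p W hsx] at this
    have : (2 + ∑ i : Fin n, (p i : ℤ) * z i) ≤ 2 + ∑ i : Fin n, (p i : ℤ) * x i := by
      exact_mod_cast this
    linarith
  · rintro ⟨hx01, hsx, hqmax⟩
    refine ⟨hx01, fun z hz01 => ?_⟩
    by_cases hzs : (∑ i : Fin n, (w i : ℤ) * z i) = (W : ℤ)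
    · rw [hyp_eq w p W hzs, hyp_eq w p W hsx]
      exact_mod_cast by linarith [hqmax z hz01 hzs]
    · have h1 := hyp_lt w p W hP hz01 hzs
      have h2 : (2:ℚ) ≤ hypObj n w p W x := by
        rw [hyp_eq w p W hsx]
        have hq0 : (0:ℤ) ≤ ∑ i : Fin n, (p i : ℤ) * x i := hyp_q_nonneg p hx01
        exact_mod_cast by linarith
      linarith
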